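/- Let ∇ be a metric connection with totally skew-symmetric torsion T on a Riemannian manifold (M,g), and ∇^g the Levi-Civita connection. Then ∇^g T = ∇ T + (1/2)σ^T, where σ^T(X,Y,Z,V) = (1/2)∑_j (e_j ⌟ T) ∧ (e_j ⌟ T)(X,Y,Z,V) for an orthonormal frame {e_j}. -/

import Mathlib

open scoped BigOperators

/-- An abstract model of a Riemannian manifold with a metric connection:
`C` plays the role of the smooth functions, `V` of the vector fields (a module over `C`),
`D X f` is the derivative of the function `f` along `X`, `lie` the Lie bracket,
`g` the metric, `nab` the metric connection with totally skew-symmetric torsion,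
`nabg` the Levi-Civita connection, and `frame` a (local orthonormal) frame. -/
structure SkewTorsionGeometry (n : ℕ) where
  C : Type
  [ringC : CommRing C]
  [algC : Algebra ℝ C]
  V : Type
  [addV : AddCommGroup V]
  [modV : Module C V]
  D : V → C → C
  lie : V → V → V
  g : V → V → C
  nab : V → V → V
  nabg : V → V → V
  frame : Fin n → V

namespace SkewTorsionGeometry

variable {n : ℕ}

instance (S : SkewTorsionGeometry n) : CommRing S.C := S.ringC
instance (S : SkewTorsionGeometry n) : Algebra ℝ S.C := S.algC
instance (S : SkewTorsionGeometry n) : AddCommGroup S.V := S.addV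
instance (S : SkewTorsionGeometry n) : Module S.C S.V := S.modV

variable (S : SkewTorsionGeometry n)

/-- The torsion 3-form `T(X,Y,Z) = g(∇_X Y - ∇_Y X - [X,Y], Z)`. -/
def Tor (X Y Z : S.V) : S.C := S.g (S.nab X Y - S.nab Y X - S.lie X Y) Z

/-- The curvature `R(X,Y,Z,W) = g([∇_X,∇_Y]Z - ∇_{[X,Y]}Z, W)`. -/
def R (X Y Z W : S.V) : S.C :=
  S.g (S.nab X (S.nab Y Z) - S.nab Y (S.nab X Z) - S.nab (S.lie X Y) Z) W

/-- The covariant derivative `(∇_X T)(Y,Z,W)` of the torsion w.r.t. `∇`. -/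
def nabT (X Y Z W : S.V) : S.C :=
  S.D X (S.Tor Y Z W) - S.Tor (S.nab X Y) Z W - S.Tor Y (S.nab X Z) W - S.Tor Y Z (S.nab X W)

/-- The covariant derivative `(∇^g_X T)(Y,Z,W)` of the torsion w.r.t. the Levi-Civita
connection. -/
def nabgT (X Y Z W : S.V) : S.C :=
  S.D X (S.Tor Y Z W) - S.Tor (S.nabg X Y) Z W - S.Tor Y (S.nabg X Z) W - S.Tor Y Z (S.nabg X W)

/-- The exterior derivative `dT` of the torsion 3-form. -/
def dT (X Y Z W : S.V) : S.C :=
  S.D X (S.Tor Y Z W) - S.D Y (S.Tor X Z W) + S.D Z (S.Tor X Y W) - S.D W (S.Tor X Y Z)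
  - S.Tor (S.lie X Y) Z W + S.Tor (S.lie X Z) Y W - S.Tor (S.lie X W) Y Z
  - S.Tor (S.lie Y Z) X W + S.Tor (S.lie Y W) X Z - S.Tor (S.lie Z W) X Y

/-- The wedge product of two 2-forms, evaluated on `(X,Y,Z,W)`. -/
def wedge22 (α β : S.V → S.V → S.C) (X Y Z W : S.V) : S.C :=
  α X Y * β Z W - α X Z * β Y W + α X W * β Y Z
  + α Y Z * β X W - α Y W * β X Z + α Z W * β X Y

/-- The 4-form `σ^T = (1/2) ∑_j (e_j ⌟ T) ∧ (e_j ⌟ T)`. -/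
noncomputable def sigmaT (X Y Z W : S.V) : S.C :=
  (1/2 : ℝ) • ∑ j : Fin n,
    S.wedge22 (fun A B => S.Tor (S.frame j) A B) (fun A B => S.Tor (S.frame j) A B) X Y Z W

/-- The codifferential `δT(X,Y) = -∑_i (∇^g_{e_i} T)(e_i, X, Y)`. -/
def deltaT (X Y : S.V) : S.C := - ∑ i : Fin n, S.nabgT (S.frame i) (S.frame i) X Y

/-- The covariant derivative `(∇_X δT)(Y,Z)` of the 2-form `δT` w.r.t. `∇`. -/
def nabDeltaT (X Y Z : S.V) : S.C :=
  S.D X (S.deltaT Y Z) - S.deltaT (S.nab X Y) Z - S.deltaT Y (S.nab X Z)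

/-- The axioms of the setting: `g` is a symmetric `C`-bilinear metric, `D` acts by
derivations, `lie` is a Lie bracket, `nab` is a metric connection whose torsion is a
3-form, `nabg` is related to `nab` by `∇^g = ∇ - (1/2)T`, and `frame` is a complete
orthonormal frame. -/
structure IsGood : Prop where
  g_symm : ∀ X Y, S.g X Y = S.g Y X
  g_addl : ∀ X Y Z, S.g (X + Y) Z = S.g X Z + S.g Y Z
  g_smull : ∀ (f : S.C) (X Y), S.g (f • X) Y = f * S.g X Y
  D_add : ∀ X f h, S.D X (f + h) = S.D X f + S.D X h
  D_mul : ∀ X f h, S.D X (f * h) = f * S.D X h + h * S.D X f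
  D_const : ∀ X (r : ℝ), S.D X (algebraMap ℝ S.C r) = 0
  lie_skew : ∀ X Y, S.lie X Y = - S.lie Y X
  jacobi : ∀ X Y Z, S.lie (S.lie X Y) Z + S.lie (S.lie Y Z) X + S.lie (S.lie Z X) Y = 0
  nab_addl : ∀ X Y Z, S.nab (X + Y) Z = S.nab X Z + S.nab Y Z
  nab_smull : ∀ (f : S.C) (X Y), S.nab (f • X) Y = f • S.nab X Y
  nab_addr : ∀ X Y Z, S.nab X (Y + Z) = S.nab X Y + S.nab X Z
  nab_leibniz : ∀ X (f : S.C) Y, S.nab X (f • Y) = f • S.nab X Y + (S.D X f) • Y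
  nab_metric : ∀ X Y Z, S.D X (S.g Y Z) = S.g (S.nab X Y) Z + S.g Y (S.nab X Z)
  torsion_skew : ∀ X Y Z, S.Tor X Y Z = - S.Tor X Z Y
  nabg_rel : ∀ X Y Z, S.g (S.nabg X Y) Z = S.g (S.nab X Y) Z - (1/2 : ℝ) • S.Tor X Y Z
  frame_orth : ∀ i j, S.g (S.frame i) (S.frame j) = if i = j then 1 else 0
  frame_complete : ∀ X : S.V, X = ∑ i : Fin n, S.g X (S.frame i) • S.frame i

/-- Auxiliary vector `A X Y = ∇_X Y - ∇_Y X - [X,Y]`, so that `T(X,Y,Z) = g(A X Y, Z)`. -/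
def Avec (S : SkewTorsionGeometry n) (X Y : S.V) : S.V :=
  S.nab X Y - S.nab Y X - S.lie X Y

lemma Tor_eq_g (S : SkewTorsionGeometry n) (X Y Z : S.V) :
    S.Tor X Y Z = S.g (S.Avec X Y) Z := rfl

section Lemmas

variable {S : SkewTorsionGeometry n} (hS : S.IsGood)
include hS

lemma g_negl (X Z : S.V) : S.g (-X) Z = - S.g X Z := by
  rw [show (-X) = (-1 : S.C) • X by rw [neg_one_smul], hS.g_smull, neg_one_mul]

lemma g_zerol (Z : S.V) : S.g 0 Z = 0 := by
  rw [show (0 : S.V) = (0 : S.C) • (0 : S.V) by rw [zero_smul], hS.g_smull, zero_mul]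

lemma g_suml {ι : Type*} (s : Finset ι) (f : ι → S.V) (Z : S.V) :
    S.g (∑ j ∈ s, f j) Z = ∑ j ∈ s, S.g (f j) Z := by
  classical
  induction s using Finset.induction_on with
  | empty => simpa using g_zerol hS Z
  | insert _ _ h ih => rw [Finset.sum_insert h, Finset.sum_insert h, hS.g_addl, ih]

lemma Tor_swap12 (X Y Z : S.V) : S.Tor X Y Z = - S.Tor Y X Z := by
  rw [Tor_eq_g, Tor_eq_g, ← g_negl hS]
  congr 1
  simp only [Avec, hS.lie_skew X Y]
  abel

lemma Tor_cyc (X Y Z : S.V) : S.Tor X Y Z = S.Tor Z X Y := by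
  rw [hS.torsion_skew, Tor_swap12 hS, neg_neg]

/-- Expansion of the metric in the orthonormal frame. -/
lemma g_expand (A B : S.V) :
    S.g A B = ∑ j : Fin n, S.g B (S.frame j) * S.g A (S.frame j) := by
  conv_lhs => rw [hS.g_symm, hS.frame_complete B]
  rw [g_suml hS]
  exact Finset.sum_congr rfl fun j _ => by rw [hS.g_smull, hS.g_symm (S.frame j) A]

lemma gA_eq_sum (X Y Z W : S.V) :
    S.g (S.Avec X Y) (S.Avec Z W)
      = ∑ j : Fin n, S.Tor (S.frame j) X Y * S.Tor (S.frame j) Z W := by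
  rw [g_expand hS]
  exact Finset.sum_congr rfl fun j _ => by
    rw [← Tor_eq_g, ← Tor_eq_g, Tor_cyc hS Z W, Tor_cyc hS X Y, mul_comm]

/-- Key substitution lemma: first argument. -/
lemma key1 (X Y Z W : S.V) :
    S.Tor (S.nabg X Y) Z W
      = S.Tor (S.nab X Y) Z W - (1/2 : ℝ) • S.g (S.Avec X Y) (S.Avec Z W) := by
  rw [Tor_cyc hS, Tor_cyc hS, Tor_eq_g, hS.g_symm (S.Avec Z W), hS.nabg_rel,
    Tor_eq_g S X Y, hS.g_symm (S.nab X Y), ← Tor_eq_g, Tor_cyc hS Z W]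

lemma key2 (X Y Z W : S.V) :
    S.Tor Y (S.nabg X Z) W
      = S.Tor Y (S.nab X Z) W + (1/2 : ℝ) • S.g (S.Avec X Z) (S.Avec Y W) := by
  rw [Tor_swap12 hS Y (S.nabg X Z), key1 hS, Tor_swap12 hS Y (S.nab X Z)]
  abel

lemma key3 (X Y Z W : S.V) :
    S.Tor Y Z (S.nabg X W)
      = S.Tor Y Z (S.nab X W) - (1/2 : ℝ) • S.g (S.Avec X W) (S.Avec Y Z) := by
  rw [Tor_cyc hS Y Z (S.nabg X W), key1 hS, Tor_cyc hS Y Z (S.nab X W)]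

lemma sigma_eq (X Y Z W : S.V) :
    S.sigmaT X Y Z W
      = S.g (S.Avec X Y) (S.Avec Z W) - S.g (S.Avec X Z) (S.Avec Y W)
          + S.g (S.Avec X W) (S.Avec Y Z) := by
  rw [sigmaT, gA_eq_sum hS, gA_eq_sum hS, gA_eq_sum hS]
  have h : ∀ j : Fin n,
      S.wedge22 (fun A B => S.Tor (S.frame j) A B) (fun A B => S.Tor (S.frame j) A B) X Y Z W
        = 2 * (S.Tor (S.frame j) X Y * S.Tor (S.frame j) Z W
            - S.Tor (S.frame j) X Z * S.Tor (S.frame j) Y W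
            + S.Tor (S.frame j) X W * S.Tor (S.frame j) Y Z) := fun j => by
    simp only [wedge22]; ring
  rw [Finset.sum_congr rfl fun j _ => h j, ← Finset.mul_sum, Algebra.smul_def, ← mul_assoc,
    show algebraMap ℝ S.C (1/2) * 2 = 1 by
      rw [show (2 : S.C) = algebraMap ℝ S.C 2 from (map_ofNat _ 2).symm, ← map_mul]
      norm_num,
    one_mul, Finset.sum_add_distrib, Finset.sum_sub_distrib]

end Lemmas

end SkewTorsionGeometry

/-- `∇^g T = ∇T + (1/2)σ^T`. -/
theorem nablagT_eq_nablaT_add_half_sigmaT {n : ℕ} (S : SkewTorsionGeometry n)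
    (hS : S.IsGood) (X Y Z W : S.V) :
    S.nabgT X Y Z W = S.nabT X Y Z W + (1/2 : ℝ) • S.sigmaT X Y Z W := by
  rw [SkewTorsionGeometry.nabgT, SkewTorsionGeometry.nabT,
    SkewTorsionGeometry.key1 hS, SkewTorsionGeometry.key2 hS,
    SkewTorsionGeometry.key3 hS, SkewTorsionGeometry.sigma_eq hS]
  module
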